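/- Let a, b be integers with 1 ≤ a < b, set n = a + b, and let ρ = (n−1, n−2, …, 1, 0) ∈ ℝⁿ. For integers α_1 ≥ α_2 ≥ … ≥ α_{2a} ≥ 0, let η(α) ∈ ℝⁿ be the vector whose i-th coordinate equals α_i for 1 ≤ i ≤ 2a and whose remaining b − a coordinates equal 0. Then ‖{η(α) − ρ} + ρ‖² ≥ Σ_{j=a+1}^{b−1} 4j² + Σ_{j=1}^{2a} j², with equality if and only if α_i = n − i for every i = 1, …, 2a. (Here {v} denotes the weakly decreasing rearrangement of the vector of absolute values (|v_1|, …, |v_n|), and ‖·‖ is the Euclidean norm.) -/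

import Mathlib

open Finset
open Fin.NatCast

private lemma sq_sum_expand {n : ℕ} (f g : Fin n → ℝ) :
    ∑ i, (f i + g i)^2 = ∑ i, f i^2 + 2*(∑ i, f i*g i) + ∑ i, g i^2 := by
  rw [Finset.mul_sum, ← Finset.sum_add_distrib, ← Finset.sum_add_distrib]
  exact Finset.sum_congr rfl fun i _ => by ring

theorem stmt8 (a b : ℕ) (ha : 1 ≤ a) (hab : a < b) (α : Fin (2 * a) → ℤ)
    (hα : ∀ i j : Fin (2 * a), i ≤ j → α j ≤ α i) (hα0 : ∀ i, 0 ≤ α i)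
    (w : Fin (a + b) → ℝ)
    (hw : ∀ i j : Fin (a + b), i ≤ j → w j ≤ w i)
    (hwperm : ∃ σ : Equiv.Perm (Fin (a + b)), ∀ i,
      w i = |(if h : ((σ i : ℕ)) < 2 * a then ((α ⟨(σ i : ℕ), h⟩ : ℤ) : ℝ) else 0)
              - (((a + b : ℕ) : ℝ) - 1 - ((σ i : ℕ) : ℝ))|) :
    ((∑ j ∈ Finset.Icc (a + 1) (b - 1), 4 * (j : ℝ) ^ 2)
        + ∑ j ∈ Finset.Icc 1 (2 * a), (j : ℝ) ^ 2)
        ≤ ∑ i : Fin (a + b), (w i + (((a + b : ℕ) : ℝ) - 1 - ((i : ℕ) : ℝ))) ^ 2 ∧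
    ((∑ i : Fin (a + b), (w i + (((a + b : ℕ) : ℝ) - 1 - ((i : ℕ) : ℝ))) ^ 2
        = (∑ j ∈ Finset.Icc (a + 1) (b - 1), 4 * (j : ℝ) ^ 2)
            + ∑ j ∈ Finset.Icc 1 (2 * a), (j : ℝ) ^ 2)
      ↔ ∀ i : Fin (2 * a), ((α i : ℤ) : ℝ) = ((a + b : ℕ) : ℝ) - 1 - ((i : ℕ) : ℝ)) := by
  obtain ⟨σ, hσ⟩ := hwperm
  haveI : NeZero (a + b) := ⟨by omega⟩
  set B : ℕ → ℝ := fun k =>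
    |(if h : k < 2 * a then ((α ⟨k, h⟩ : ℤ) : ℝ) else 0)
      - (((a + b : ℕ) : ℝ) - 1 - (k : ℝ))| with hBdef
  set R : ℕ → ℝ := fun k => ((a + b : ℕ) : ℝ) - 1 - (k : ℝ) with hRdef
  have hBnn : ∀ k, 0 ≤ B k := fun k => abs_nonneg _
  have hwB : ∀ i, w i = B ((σ i : ℕ)) := by
    intro i; simp only [hBdef]; exact hσ i
  set τ : Equiv.Perm (Fin (a + b)) := Equiv.addLeft ((2*a : ℕ) : Fin (a + b)) with hτdef
  have hτval : ∀ i : Fin (a + b), ((τ i : ℕ)) = (2*a + (i : ℕ)) % (a + b) := by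
    intro i
    have h1 : τ i = ((2*a : ℕ) : Fin (a+b)) + i := rfl
    rw [h1, Fin.add_def, Fin.val_cast_of_lt (by omega : 2*a < a+b)]
  have hτ1 : ∀ i : Fin (a+b), (i:ℕ) < b - a → ((τ i : ℕ)) = 2*a + (i:ℕ) := by
    intro i hi; rw [hτval i, Nat.mod_eq_of_lt (by omega)]
  have hτ2 : ∀ i : Fin (a+b), b - a ≤ (i:ℕ) → ((τ i : ℕ)) = (i:ℕ) - (b - a) := by
    intro i hi
    have hi2 := i.isLt
    rw [hτval i, Nat.mod_eq_sub_mod (by omega), Nat.mod_eq_of_lt (by omega)]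
    omega
  have hBhigh : ∀ k, 2*a ≤ k → k < a + b → B k = ((a+b:ℕ):ℝ) - 1 - (k:ℝ) := by
    intro k h1 h2
    simp only [hBdef]
    rw [dif_neg (by omega : ¬ k < 2*a), zero_sub, abs_neg, abs_of_nonneg]
    have : (k:ℝ) + 1 ≤ ((a+b:ℕ):ℝ) := by exact_mod_cast h2
    linarith
  -- rearrangement: lower bound
  have hMon : Monovary w (fun i : Fin (a+b) => R (i:ℕ)) := by
    intro i j hij
    apply hw
    rw [Fin.le_def]
    simp only [hRdef] at hij
    have : ((j:ℕ):ℝ) < ((i:ℕ):ℝ) := by linarith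
    exact_mod_cast this.le
  have hrearr : ∑ i, B ((τ i : ℕ)) * R (i:ℕ) ≤ ∑ i, w i * R (i:ℕ) := by
    have h1 := hMon.sum_comp_perm_mul_le_sum_mul (σ := τ.trans σ.symm)
    refine le_trans (le_of_eq ?_) h1
    refine Finset.sum_congr rfl fun i _ => ?_
    congr 1
    rw [Equiv.trans_apply, hwB, Equiv.apply_symm_apply]
  have hsumB : ∑ i : Fin (a+b), (w i)^2 = ∑ i : Fin (a+b), (B ((τ i:ℕ)))^2 := by
    have e1 : ∑ i : Fin (a+b), (w i)^2 = ∑ i, (B ((σ i : ℕ)))^2 :=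
      Finset.sum_congr rfl fun i _ => by rw [hwB]
    rw [e1, Equiv.sum_comp σ (fun i : Fin (a+b) => (B (i:ℕ))^2),
      ← Equiv.sum_comp τ (fun i : Fin (a+b) => (B (i:ℕ))^2)]
  have E1 := sq_sum_expand (fun i : Fin (a+b) => w i) (fun i => R (i:ℕ))
  have E2 := sq_sum_expand (fun i : Fin (a+b) => B ((τ i:ℕ))) (fun i => R (i:ℕ))
  have hST : ∑ i : Fin (a+b), (B ((τ i:ℕ)) + R (i:ℕ))^2 ≤ ∑ i : Fin (a+b), (w i + R (i:ℕ))^2 := by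
    rw [E1, E2, hsumB]
    linarith [hrearr]
  -- compute T
  have hTrange : ∑ i : Fin (a+b), (B ((τ i:ℕ)) + R (i:ℕ))^2
      = ∑ k ∈ range (a+b), (B ((2*a+k) % (a+b)) + R k)^2 := by
    rw [← Fin.sum_univ_eq_sum_range (fun k => (B ((2*a+k) % (a+b)) + R k)^2) (a+b)]
    exact Finset.sum_congr rfl fun i _ => by rw [hτval]
  have hsplit : ∀ F : ℕ → ℝ, ∑ k ∈ range (a+b), F k
      = ∑ k ∈ range (b-a), F k + ∑ k ∈ range (2*a), F ((b-a)+k) := by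
    intro F
    rw [show a+b = (b-a)+2*a by omega]
    exact Finset.sum_range_add F (b-a) (2*a)
  have hc1 : ∑ k ∈ range (b-a), (B ((2*a+k) % (a+b)) + R k)^2
      = ∑ j ∈ Finset.Icc a (b-1), 4*(j:ℝ)^2 := by
    have e1 : ∀ k ∈ range (b-a), (B ((2*a+k) % (a+b)) + R k)^2 = 4*((b:ℝ)-1-(k:ℝ))^2 := by
      intro k hk
      rw [Finset.mem_range] at hk
      rw [Nat.mod_eq_of_lt (by omega), hBhigh _ (by omega) (by omega)]
      simp only [hRdef]
      push_cast
      ring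
    rw [Finset.sum_congr rfl e1]
    rw [show Finset.Icc a (b-1) = Finset.Ico a b by rw [← Finset.Ico_add_one_right_eq_Icc]; congr 1; omega]
    rw [Finset.sum_Ico_eq_sum_range]
    rw [← Finset.sum_range_reflect (fun i => 4*(((a+i : ℕ)):ℝ)^2) (b-a)]
    refine Finset.sum_congr rfl fun k hk => ?_
    rw [Finset.mem_range] at hk
    have h1 : a + (b - a - 1 - k) = b - 1 - k := by omega
    rw [h1, Nat.cast_sub (by omega : k ≤ b - 1), Nat.cast_sub (by omega : 1 ≤ b)]
    push_cast
    ring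
  have hc2 : ∀ k ∈ range (2*a), (B ((2*a + ((b-a)+k)) % (a+b)) + R ((b-a)+k))^2
      = (B k + R ((b-a)+k))^2 := by
    intro k hk
    rw [Finset.mem_range] at hk
    rw [show 2*a + ((b-a)+k) = (a+b) + k by omega, Nat.add_mod_left,
      Nat.mod_eq_of_lt (by omega)]
  have hDval : ∀ k, k < 2*a → R ((b-a)+k) = 2*(a:ℝ) - 1 - (k:ℝ) := by
    intro k hk
    simp only [hRdef]
    have hba : ((b - a + k : ℕ) : ℝ) = (b:ℝ) - a + k := by
      push_cast [Nat.cast_sub hab.le]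
      ring
    rw [hba]
    push_cast
    ring
  have hDnn : ∀ k, k < 2*a → 0 ≤ R ((b-a)+k) := by
    intro k hk
    rw [hDval k hk]
    have : (k:ℝ) + 1 ≤ 2*(a:ℝ) := by exact_mod_cast hk
    linarith
  have hDsum : ∑ k ∈ range (2*a), R ((b-a)+k)^2
      = (∑ j ∈ Finset.Icc 1 (2*a), (j:ℝ)^2) - 4*(a:ℝ)^2 := by
    have e1 : ∀ k ∈ range (2*a), R ((b-a)+k)^2 = (fun j : ℕ => ((j:ℝ))^2) (2*a-1-k) := by
      intro k hk
      rw [Finset.mem_range] at hk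
      rw [hDval k hk]
      simp only
      rw [Nat.cast_sub (by omega : k ≤ 2*a-1), Nat.cast_sub (by omega : 1 ≤ 2*a)]
      push_cast
      ring
    rw [Finset.sum_congr rfl e1, Finset.sum_range_reflect (fun j : ℕ => ((j:ℝ))^2) (2*a)]
    have h3 : ∑ j ∈ Finset.Icc 1 (2*a), ((j:ℝ))^2 = ∑ j ∈ range (2*a+1), ((j:ℝ))^2 := by
      rw [Finset.range_eq_Ico, ← Finset.Ico_add_one_right_eq_Icc,
        ← Finset.sum_Ico_consecutive (fun j : ℕ => ((j:ℝ))^2)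
          (by omega : 0 ≤ 1) (by omega : 1 ≤ 2*a+1)]
      simp
    rw [h3, Finset.sum_range_succ]
    push_cast
    ring
  have hIccsplit : ∑ j ∈ Finset.Icc a (b-1), 4*(j:ℝ)^2
      = 4*(a:ℝ)^2 + ∑ j ∈ Finset.Icc (a+1) (b-1), 4*(j:ℝ)^2 := by
    rw [show Finset.Icc a (b-1) = insert a (Finset.Icc (a+1) (b-1)) by
      ext x; simp only [Finset.mem_insert, Finset.mem_Icc]; omega]
    rw [Finset.sum_insert (by simp)]
  have hT : ∑ i : Fin (a+b), (B ((τ i:ℕ)) + R (i:ℕ))^2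
      = ((∑ j ∈ Finset.Icc (a + 1) (b - 1), 4 * (j : ℝ) ^ 2)
          + ∑ j ∈ Finset.Icc 1 (2 * a), (j : ℝ) ^ 2)
        + ∑ k ∈ range (2*a), ((B k + R ((b-a)+k))^2 - R ((b-a)+k)^2) := by
    rw [hTrange, hsplit, hc1, Finset.sum_congr rfl hc2, Finset.sum_sub_distrib, hDsum]
    linarith [hIccsplit]
  have hEk : ∀ k ∈ range (2*a), 0 ≤ (B k + R ((b-a)+k))^2 - R ((b-a)+k)^2 := by
    intro k hk
    rw [Finset.mem_range] at hk
    nlinarith [hBnn k, hDnn k hk]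
  have hE : 0 ≤ ∑ k ∈ range (2*a), ((B k + R ((b-a)+k))^2 - R ((b-a)+k)^2) :=
    Finset.sum_nonneg hEk
  constructor
  · linarith [hST, hT, hE]
  constructor
  · intro hEq
    have hE0 : ∑ k ∈ range (2*a), ((B k + R ((b-a)+k))^2 - R ((b-a)+k)^2) = 0 := by
      linarith [hST, hT]
    have hall := (Finset.sum_eq_zero_iff_of_nonneg hEk).mp hE0
    intro i
    have hi : (i:ℕ) ∈ range (2*a) := Finset.mem_range.mpr i.isLt
    have hterm := hall (i:ℕ) hi
    have hB0 : B (i:ℕ) = 0 := by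
      nlinarith [hBnn (i:ℕ), hDnn (i:ℕ) i.isLt]
    simp only [hBdef] at hB0
    rw [dif_pos i.isLt, abs_eq_zero, sub_eq_zero] at hB0
    rw [show (⟨(i:ℕ), i.isLt⟩ : Fin (2*a)) = i from rfl] at hB0
    exact hB0
  · intro hδ
    have hB0 : ∀ k, k < 2*a → B k = 0 := by
      intro k h
      simp only [hBdef]
      rw [dif_pos h, hδ ⟨k, h⟩]
      simp
    have hE0 : ∑ k ∈ range (2*a), ((B k + R ((b-a)+k))^2 - R ((b-a)+k)^2) = 0 :=
      Finset.sum_eq_zero fun k hk => by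
        rw [hB0 k (Finset.mem_range.mp hk)]; ring
    have hganti : ∀ i j : Fin (a+b), i ≤ j → B ((τ j : ℕ)) ≤ B ((τ i : ℕ)) := by
      intro i j hij
      rw [Fin.le_def] at hij
      by_cases hj : (j:ℕ) < b - a
      · have hi : (i:ℕ) < b - a := lt_of_le_of_lt hij hj
        rw [hτ1 i hi, hτ1 j hj, hBhigh _ (by omega) (by omega), hBhigh _ (by omega) (by omega)]
        have : ((i:ℕ):ℝ) ≤ ((j:ℕ):ℝ) := by exact_mod_cast hij
        push_cast
        linarith
      · have hj2 := j.isLt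
        rw [hτ2 j (by omega), hB0 _ (by omega)]
        exact hBnn _
    have hMg : Monovary (fun i : Fin (a+b) => B ((τ i : ℕ))) (fun i : Fin (a+b) => R (i:ℕ)) := by
      intro i j hij
      apply hganti
      rw [Fin.le_def]
      simp only [hRdef] at hij
      have : ((j:ℕ):ℝ) < ((i:ℕ):ℝ) := by linarith
      exact_mod_cast this.le
    have hup : ∑ i, w i * R (i:ℕ) ≤ ∑ i, B ((τ i : ℕ)) * R (i:ℕ) := by
      have h1 := hMg.sum_comp_perm_mul_le_sum_mul (σ := σ.trans τ.symm)
      refine le_trans (le_of_eq ?_) h1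
      refine Finset.sum_congr rfl fun i _ => ?_
      congr 1
      rw [hwB, Equiv.trans_apply, Equiv.apply_symm_apply]
    have heqwr : ∑ i, w i * R (i:ℕ) = ∑ i, B ((τ i : ℕ)) * R (i:ℕ) :=
      le_antisymm hup hrearr
    rw [E1, hsumB, heqwr]
    rw [E2] at hT
    linarith [hT, hE0]
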